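/- Let n ≥ 7 and let t be an integer with 2 ≤ t ≤ ⌊(n−1)/2⌋ − 1, and set M := n − t − 2. Let F be a finite field whose characteristic does not divide t, let V be a finite-dimensional F-vector space, and let A_1,…,A_M, B_1,…,B_{t+1}, C be subspaces of V. Then inequality (b) holds: M·H(C) ≤ H(B_1,…,B_{t+1},A_{t+2},…,A_M) + M·( H(C | A_1,…,A_M) + Σ_{i=1}^{M} I(Σ_{j∈[M], j≠i} A_j ; C) + Σ_{i=2}^{t+1} I(A_1+⋯+A_{i−1} ; A_i) + Σ_{i=1}^{t+1} ( H(C | A_i, B_i) + H(B_i | A_j : j∈[M], j≠i) + I(A_1+⋯+A_i ; A_{i+1}+⋯+A_M) ) ). -/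

import Mathlib

open Finset

variable {F V : Type*} [Field F] [AddCommGroup V] [Module F V]

/-- `eH X` is the dimension of the subspace `X`, as an integer
(the "entropy" `H(X)` of the paper). -/
noncomputable def eH (X : Submodule F V) : ℤ := Module.finrank F X

/-- Left-hand side of inequality (a):
`H(B_1,…,B_{t+1},A_{t+2},…,A_M) + (t+2)(M−t−1)·H(C)`. -/
noncomputable def lhsA (t M : ℕ) (A B : ℕ → Submodule F V) (C : Submodule F V) : ℤ :=
  eH ((∑ i ∈ Icc 1 (t+1), B i) + ∑ i ∈ Icc (t+2) M, A i)
    + ((t : ℤ) + 2) * ((M : ℤ) - t - 1) * eH C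

/-- Right-hand side of inequality (a):
`(M−1)·I(A_1+⋯+A_M ; C) + (t+2)·Σ_{i=t+2}^{M} H(A_i)
 + ((t+2)(M−t)−1)·( H(C | A_1,…,A_M) + Σ_{i=1}^{M} I(Σ_{j≠i} A_j ; C) )
 + Σ_{i=1}^{t+1} ( H(B_i | A_j : j≠i) + H(B_i | A_i, C)
      + I(A_1+⋯+A_i ; A_{i+1}+⋯+A_{t+1}) + I(A_1+⋯+A_{i−1} ; A_i) )`. -/
noncomputable def rhsA (t M : ℕ) (A B : ℕ → Submodule F V) (C : Submodule F V) : ℤ :=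
  ((M : ℤ) - 1) * eH ((∑ i ∈ Icc 1 M, A i) ⊓ C)
  + ((t : ℤ) + 2) * ∑ i ∈ Icc (t+2) M, eH (A i)
  + (((t : ℤ) + 2) * ((M : ℤ) - t) - 1) *
      ((eH (C + ∑ i ∈ Icc 1 M, A i) - eH (∑ i ∈ Icc 1 M, A i))
        + ∑ i ∈ Icc 1 M, eH ((∑ j ∈ (Icc 1 M).erase i, A j) ⊓ C))
  + ∑ i ∈ Icc 1 (t+1),
      ((eH (B i + ∑ j ∈ (Icc 1 M).erase i, A j) - eH (∑ j ∈ (Icc 1 M).erase i, A j))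
        + (eH (B i + (A i + C)) - eH (A i + C))
        + eH ((∑ j ∈ Icc 1 i, A j) ⊓ (∑ j ∈ Icc (i+1) (t+1), A j))
        + eH ((∑ j ∈ Icc 1 (i-1), A j) ⊓ A i))

/-- Inequality (a) of the paper. -/
def IneqA (t M : ℕ) (A B : ℕ → Submodule F V) (C : Submodule F V) : Prop :=
  lhsA t M A B C ≤ rhsA t M A B C

/-- Left-hand side of inequality (b): `M·H(C)`. -/
noncomputable def lhsB (t M : ℕ) (A B : ℕ → Submodule F V) (C : Submodule F V) : ℤ :=
  (M : ℤ) * eH C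

/-- Right-hand side of the `M`-scaled inequality (b):
`H(B_1,…,B_{t+1},A_{t+2},…,A_M)
 + M·( H(C | A_1,…,A_M) + Σ_{i=1}^{M} I(Σ_{j≠i} A_j ; C)
    + Σ_{i=2}^{t+1} I(A_1+⋯+A_{i−1} ; A_i)
    + Σ_{i=1}^{t+1} ( H(C | A_i, B_i) + H(B_i | A_j : j≠i)
        + I(A_1+⋯+A_i ; A_{i+1}+⋯+A_M) ) )`. -/
noncomputable def rhsB (t M : ℕ) (A B : ℕ → Submodule F V) (C : Submodule F V) : ℤ :=
  eH ((∑ i ∈ Icc 1 (t+1), B i) + ∑ i ∈ Icc (t+2) M, A i)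
  + (M : ℤ) *
      ((eH (C + ∑ i ∈ Icc 1 M, A i) - eH (∑ i ∈ Icc 1 M, A i))
        + ∑ i ∈ Icc 1 M, eH ((∑ j ∈ (Icc 1 M).erase i, A j) ⊓ C)
        + ∑ i ∈ Icc 2 (t+1), eH ((∑ j ∈ Icc 1 (i-1), A j) ⊓ A i)
        + ∑ i ∈ Icc 1 (t+1),
            ((eH (C + (A i + B i)) - eH (A i + B i))
              + (eH (B i + ∑ j ∈ (Icc 1 M).erase i, A j) - eH (∑ j ∈ (Icc 1 M).erase i, A j))
              + eH ((∑ j ∈ Icc 1 i, A j) ⊓ (∑ j ∈ Icc (i+1) M, A j))))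

/-- Inequality (b) of the paper (in `M`-scaled form). -/
def IneqB (t M : ℕ) (A B : ℕ → Submodule F V) (C : Submodule F V) : Prop :=
  lhsB t M A B C ≤ rhsB t M A B C

set_option linter.unusedSectionVars false
set_option maxHeartbeats 1600000

section H
variable [FiniteDimensional F V]
lemma eH_nonneg (X : Submodule F V) : 0 ≤ eH X := Int.ofNat_nonneg _
lemma eH_mono {X Y : Submodule F V} (h : X ≤ Y) : eH X ≤ eH Y := by
  unfold eH; exact_mod_cast Submodule.finrank_mono h
lemma eH_sup_inf (X Y : Submodule F V) : eH (X ⊔ Y) + eH (X ⊓ Y) = eH X + eH Y := by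
  unfold eH; exact_mod_cast Submodule.finrank_sup_add_finrank_inf_eq X Y
lemma eH_bot : eH (⊥ : Submodule F V) = 0 := by simp [eH]
lemma eH_map_le (f : V →ₗ[F] V) (X : Submodule F V) : eH (X.map f) ≤ eH X := by
  unfold eH; exact_mod_cast Submodule.finrank_map_le f X
lemma eH_map_add_ker (f : V →ₗ[F] V) (X : Submodule F V) :
    eH (X.map f) + eH (X ⊓ LinearMap.ker f) = eH X := by
  have h := LinearMap.finrank_range_add_finrank_ker (f.domRestrict X)
  rw [LinearMap.range_domRestrict, LinearMap.ker_domRestrict] at h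
  have h2 : Module.finrank F ((LinearMap.ker f).comap X.subtype)
      = Module.finrank F (X ⊓ LinearMap.ker f : Submodule F V) := by
    rw [← Submodule.finrank_map_subtype_eq X ((LinearMap.ker f).comap X.subtype),
      Submodule.map_comap_subtype]
  rw [h2] at h
  unfold eH; exact_mod_cast h
lemma eH_disjoint_sup {X Y : Submodule F V} (h : X ⊓ Y = ⊥) :
    eH (X ⊔ Y) = eH X + eH Y := by
  have := eH_sup_inf X Y
  rw [h, eH_bot, add_zero] at this
  exact this
lemma exists_compl_inside {U W : Submodule F V} (h : U ≤ W) :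
    ∃ G : Submodule F V, G ≤ W ∧ U ⊓ G = ⊥ ∧ U ⊔ G = W ∧ eH G = eH W - eH U := by
  obtain ⟨G', hG'⟩ := (U.comap W.subtype).exists_isCompl
  have hb : U ⊓ G'.map W.subtype = ⊥ := by
    have := congrArg (Submodule.map W.subtype) hG'.disjoint.eq_bot
    rwa [Submodule.map_inf _ W.injective_subtype, Submodule.map_comap_subtype,
      inf_of_le_right h, Submodule.map_bot] at this
  have hs : U ⊔ G'.map W.subtype = W := by
    have := congrArg (Submodule.map W.subtype) hG'.codisjoint.eq_top
    rwa [Submodule.map_sup, Submodule.map_comap_subtype,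
      inf_of_le_right h, Submodule.map_subtype_top] at this
  refine ⟨G'.map W.subtype, Submodule.map_subtype_le _ _, hb, hs, ?_⟩
  have := eH_disjoint_sup hb
  rw [hs] at this
  linarith
end H

lemma sum_submodule_eq_sup (s : Finset ℕ) (f : ℕ → Submodule F V) :
    ∑ i ∈ s, f i = s.sup f := by
  induction s using Finset.cons_induction with
  | empty => simp
  | cons a s ha ih => rw [Finset.sum_cons, Finset.sup_cons, ih, Submodule.add_eq_sup]
lemma le_sum_of_mem {s : Finset ℕ} {f : ℕ → Submodule F V} {i : ℕ} (h : i ∈ s) :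
    f i ≤ ∑ j ∈ s, f j := by rw [sum_submodule_eq_sup]; exact Finset.le_sup h
lemma sum_le_submodule {s : Finset ℕ} {f : ℕ → Submodule F V} {X : Submodule F V}
    (h : ∀ i ∈ s, f i ≤ X) : ∑ j ∈ s, f j ≤ X := by
  rw [sum_submodule_eq_sup]; exact Finset.sup_le h
lemma map_finsetSum' (g : V →ₗ[F] V) (s : Finset ℕ) (f : ℕ → Submodule F V) :
    (∑ i ∈ s, f i).map g = ∑ i ∈ s, (f i).map g := by
  induction s using Finset.cons_induction with
  | empty => simp
  | cons a s ha ih =>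
      rw [Finset.sum_cons, Finset.sum_cons, Submodule.add_eq_sup, Submodule.add_eq_sup,
        Submodule.map_sup, ih]
section H2
variable [FiniteDimensional F V]
lemma eH_sum_le (s : Finset ℕ) (f : ℕ → Submodule F V) :
    eH (∑ i ∈ s, f i) ≤ ∑ i ∈ s, eH (f i) := by
  induction s using Finset.cons_induction with
  | empty => simp [eH]; exact finrank_bot F V
  | cons a s ha ih =>
      rw [Finset.sum_cons, Finset.sum_cons, Submodule.add_eq_sup]
      have h1 := eH_sup_inf (f a) (∑ i ∈ s, f i)
      have h2 := eH_nonneg ((f a) ⊓ (∑ i ∈ s, f i))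
      linarith
lemma eH_inf_ge {C X Y : Submodule F V} (hX : X ≤ C) (hY : Y ≤ C) :
    eH X + eH Y - eH C ≤ eH (X ⊓ Y) := by
  have h1 := eH_sup_inf X Y
  have h2 : eH (X ⊔ Y) ≤ eH C := eH_mono (sup_le hX hY)
  linarith
lemma eH_inf_finset (C : Submodule F V) (s : Finset ℕ) (m : ℕ → Submodule F V)
    (hm : ∀ i ∈ s, m i ≤ C) (X : Submodule F V) (hX : X ≤ C) :
    eH X + ∑ i ∈ s, (eH (m i) - eH C) ≤ eH (X ⊓ s.inf m) := by
  induction s using Finset.cons_induction with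
  | empty => simp
  | cons a s ha ih =>
      rw [Finset.sum_cons, Finset.inf_cons, inf_left_comm]
      have hIH := ih (fun i hi => hm i (Finset.mem_cons_of_mem hi))
      have h2 : eH (m a) + eH (X ⊓ s.inf m) - eH C ≤ eH (m a ⊓ (X ⊓ s.inf m)) :=
        eH_inf_ge (hm a (Finset.mem_cons_self a s)) (le_trans inf_le_left hX)
      linarith
lemma eH_inf_drop {X W W' : Submodule F V} (h : W' ≤ W) :
    eH (X ⊓ W) - eH (X ⊓ W') ≤ eH W - eH W' := by
  have h1 := eH_sup_inf (X ⊓ W) W'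
  have h2 : (X ⊓ W) ⊓ W' = X ⊓ W' := by
    rw [inf_assoc, inf_of_le_right h]
  have h3 : eH ((X ⊓ W) ⊔ W') ≤ eH W := eH_mono (sup_le inf_le_right h)
  rw [h2] at h1
  linarith
end H2

lemma proj_props {Ei Ki : Submodule F V} (h : IsCompl Ei Ki) :
    ∃ q : V →ₗ[F] V, (∀ x ∈ Ei, q x = x) ∧ (∀ x, q x ∈ Ei) ∧ (∀ x, x - q x ∈ Ki) ∧
      (∀ x u, u ∈ Ei → x - u ∈ Ki → q x = u) := by
  set q : V →ₗ[F] V := Ei.subtype ∘ₗ Ei.projectionOnto Ki h with hq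
  have hmem : ∀ x, q x ∈ Ei := fun x => (Ei.projectionOnto Ki h x).2
  have hleft : ∀ x ∈ Ei, q x = x := by
    intro x hx
    have := Submodule.projectionOnto_apply_left h ⟨x, hx⟩
    simp [hq, LinearMap.comp_apply]
    exact hx
  have hsub : ∀ x, x - q x ∈ Ki := by
    intro x
    have hx : x ∈ Ei ⊔ Ki := by rw [h.sup_eq_top]; trivial
    obtain ⟨u, hu, v, hv, rfl⟩ := Submodule.mem_sup.1 hx
    have : q (u + v) = u := by
      have h1 : q u = u := hleft u hu
      have h2 : q v = 0 := by
        simp [hq, LinearMap.comp_apply,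
          Submodule.projectionOnto_apply_right h ⟨v, hv⟩]
      rw [map_add, h1, h2, add_zero]
    rw [this]; simpa using hv
  refine ⟨q, hleft, hmem, hsub, ?_⟩
  intro x u hu hxu
  have h1 : q x - u ∈ Ei := Submodule.sub_mem _ (hmem x) hu
  have h2 : q x - u ∈ Ki := by
    have : q x - u = (x - u) - (x - q x) := by abel
    rw [this]; exact Submodule.sub_mem _ hxu (hsub x)
  have := (disjoint_iff.1 h.disjoint)
  have hb : q x - u ∈ (⊥ : Submodule F V) := this ▸ Submodule.mem_inf.2 ⟨h1, h2⟩
  exact sub_eq_zero.1 (Submodule.mem_bot F |>.1 hb)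

lemma isCompl_shift {E G K : Submodule F V} (hEG : E ⊓ G = ⊥)
    (h : IsCompl (E ⊔ G) K) : IsCompl E (G ⊔ K) := by
  constructor
  · rw [disjoint_iff]
    rw [Submodule.eq_bot_iff]
    intro x hx
    obtain ⟨hxE, hxGK⟩ := Submodule.mem_inf.1 hx
    obtain ⟨g, hg, k, hk, rfl⟩ := Submodule.mem_sup.1 hxGK
    have hkEG : k ∈ (E ⊔ G) := by
      have : k = (g + k) - g := by abel
      rw [this]
      exact Submodule.sub_mem _ (Submodule.mem_sup_left hxE) (Submodule.mem_sup_right hg)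
    have hk0 : k = 0 := by
      have := disjoint_iff.1 h.disjoint
      exact (Submodule.mem_bot F).1 (this ▸ Submodule.mem_inf.2 ⟨hkEG, hk⟩)
    rw [hk0, add_zero] at hxE ⊢
    exact (Submodule.mem_bot F).1 (hEG ▸ Submodule.mem_inf.2 ⟨hxE, hg⟩)
  · rw [codisjoint_iff, ← sup_assoc, h.codisjoint.eq_top]

lemma sum_Icc_one_int (n : ℕ) (f : ℕ → ℤ) :
    ∑ i ∈ Icc 1 n, f i = ∑ i ∈ range n, f (i+1) := by
  induction n with
  | zero => simp
  | succ n ih =>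
      rw [Finset.sum_Icc_succ_top (by omega : 1 ≤ n + 1), ih, Finset.sum_range_succ]

noncomputable def Es (A : ℕ → Submodule F V) (i : ℕ) : Submodule F V := ∑ j ∈ Icc 1 i, A j
noncomputable def SMs (M : ℕ) (A : ℕ → Submodule F V) (i : ℕ) : Submodule F V :=
  ∑ j ∈ Icc (i+1) M, A j
noncomputable def Tis (M : ℕ) (A : ℕ → Submodule F V) (i : ℕ) : Submodule F V :=
  ∑ j ∈ (Icc 1 M).erase i, A j

variable (A : ℕ → Submodule F V) (M : ℕ)

lemma Es_zero : Es A 0 = ⊥ := by simp [Es]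

lemma Es_succ (i : ℕ) : Es A (i+1) = Es A i ⊔ A (i+1) := by
  rw [Es, Es, Finset.sum_Icc_succ_top (by omega : 1 ≤ i + 1), Submodule.add_eq_sup]

lemma Es_mono {i j : ℕ} (h : i ≤ j) : Es A i ≤ Es A j := by
  apply sum_le_submodule
  intro l hl
  exact le_sum_of_mem (by simp at hl ⊢; omega)

lemma A_le_Es {i : ℕ} (h : 1 ≤ i) : A i ≤ Es A i :=
  le_sum_of_mem (by simp; omega)

lemma SMs_rec {i : ℕ} (h : i < M) : SMs M A i = A (i+1) ⊔ SMs M A (i+1) := by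
  rw [SMs, SMs, ← Submodule.add_eq_sup, ← Finset.add_sum_erase _ _ (by simp; omega : i + 1 ∈ Icc (i+1) M)]
  congr 1
  rw [Finset.Icc_erase_left]
  rw [← Finset.Icc_add_one_left_eq_Ioc]

lemma A_le_SMs {i l : ℕ} (h1 : i < l) (h2 : l ≤ M) : A l ≤ SMs M A i :=
  le_sum_of_mem (by simp; omega)

lemma SMs_mono {i j : ℕ} (h : i ≤ j) : SMs M A j ≤ SMs M A i := by
  apply sum_le_submodule
  intro l hl
  exact le_sum_of_mem (by simp at hl ⊢; omega)

lemma SMs_le_T (i : ℕ) : SMs M A i ≤ Es A M := by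
  apply sum_le_submodule
  intro l hl
  exact le_sum_of_mem (by simp at hl ⊢; omega)

lemma Es_sup_SMs {i : ℕ} (h : i ≤ M) : Es A i ⊔ SMs M A i = Es A M := by
  induction i with
  | zero => rw [Es_zero, SMs, Es]; simp
  | succ n ih =>
      rw [Es_succ, sup_assoc, ← SMs_rec A M (by omega : n < M), ih (by omega)]

lemma Tis_le_T (i : ℕ) : Tis M A i ≤ Es A M := by
  apply sum_le_submodule
  intro l hl
  exact le_sum_of_mem (by simp at hl ⊢; omega)

lemma A_sup_Tis {i : ℕ} (h : i ∈ Icc 1 M) : A i ⊔ Tis M A i = Es A M := by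
  rw [Tis, Es, ← Submodule.add_eq_sup, Finset.add_sum_erase _ _ h]

lemma SMs_le_Tis (i : ℕ) : SMs M A i ≤ Tis M A i := by
  apply sum_le_submodule
  intro l hl
  exact le_sum_of_mem (by simp at hl ⊢; omega)

lemma Es_le_Tis {i : ℕ} (h : i + 1 ≤ M) : Es A i ≤ Tis M A (i+1) := by
  apply sum_le_submodule
  intro l hl
  exact le_sum_of_mem (by simp at hl ⊢; omega)

lemma Tis_le_sup (i : ℕ) : Tis M A (i+1) ≤ Es A i ⊔ SMs M A (i+1) := by
  apply sum_le_submodule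
  intro l hl
  simp at hl
  rcases lt_or_ge l (i+1) with hc | hc
  · exact le_trans (le_sum_of_mem (by simp; omega)) le_sup_left
  · exact le_trans (le_sum_of_mem (by simp; omega)) le_sup_right

theorem coreB [FiniteDimensional F V]
    (t M : ℕ) (htM : t + 1 ≤ M) (h2M : 2 ≤ M) (hchar : (t : F) ≠ 0)
    (A B : ℕ → Submodule F V) (C : Submodule F V) : IneqB t M A B C := by
  classical
  unfold IneqB lhsB rhsB
  simp only [Submodule.add_eq_sup]
  set m : ℕ → Submodule F V := fun i => C ⊓ (A i ⊔ (B i ⊓ Tis M A i)) with hm_def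
  set D' : Submodule F V := (C ⊓ Es A M) ⊓ (Icc 1 (t+1)).inf m with hD'_def
  have hmC : ∀ i ∈ Icc 1 (t+1), m i ≤ C := fun i _ => inf_le_left
  have hD'C : D' ≤ C := le_trans inf_le_left inf_le_left
  have hD'T : D' ≤ Es A M := le_trans inf_le_left inf_le_right
  have hD'dim : eH (C ⊓ Es A M) + ∑ i ∈ Icc 1 (t+1), (eH (m i) - eH C) ≤ eH D' :=
    eH_inf_finset C _ m hmC _ inf_le_left
  have hm_ge : ∀ i ∈ Icc 1 (t+1), eH C - ((eH (C ⊔ (A i ⊔ B i)) - eH (A i ⊔ B i))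
      + (eH (B i ⊔ Tis M A i) - eH (Tis M A i))) ≤ eH (m i) := by
    intro i hi
    have hW' : A i ⊔ (B i ⊓ Tis M A i) ≤ A i ⊔ B i := sup_le_sup_left inf_le_left _
    have hdrop := eH_inf_drop (X := C) hW'
    have h1 := eH_sup_inf C (A i ⊔ B i)
    have h2 := eH_sup_inf (B i) (Tis M A i)
    have h3 : eH (A i ⊔ B i) ≤ eH (A i ⊔ (B i ⊓ Tis M A i)) + eH (B i)
        - eH (B i ⊓ Tis M A i) := by
      have hle : A i ⊔ B i ≤ (A i ⊔ (B i ⊓ Tis M A i)) ⊔ B i :=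
        sup_le (le_trans le_sup_left le_sup_left) le_sup_right
      have h4 := eH_sup_inf (A i ⊔ (B i ⊓ Tis M A i)) (B i)
      have h5 : eH (B i ⊓ Tis M A i) ≤ eH ((A i ⊔ (B i ⊓ Tis M A i)) ⊓ B i) :=
        eH_mono (le_inf le_sup_right inf_le_left)
      have h6 := eH_mono hle
      linarith
    have h7 : eH (C ⊓ (A i ⊔ B i)) = eH C + eH (A i ⊔ B i) - eH (C ⊔ (A i ⊔ B i)) := by
      linarith [eH_sup_inf C (A i ⊔ B i)]
    have : eH (m i) = eH (C ⊓ (A i ⊔ (B i ⊓ Tis M A i))) := rfl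
    rw [this]
    linarith
  set U : Submodule F V := ∑ i ∈ Icc 1 M, (D' ⊓ Tis M A i) with hU_def
  have hUD' : U ≤ D' := sum_le_submodule (fun i _ => inf_le_left)
  obtain ⟨D, hDD', hUDbot, hUDsup, hDdim0⟩ := exists_compl_inside hUD'
  have hUdim : eH U ≤ ∑ i ∈ Icc 1 M, eH (Tis M A i ⊓ C) := by
    refine le_trans (eH_sum_le _ _) (Finset.sum_le_sum ?_)
    intro i _
    exact eH_mono (le_inf inf_le_right (le_trans inf_le_left hD'C))
  have hDC : D ≤ C := le_trans hDD' hD'C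
  have hDT : D ≤ Es A M := le_trans hDD' hD'T
  have hDTi : ∀ i ∈ Icc 1 M, D ⊓ Tis M A i = ⊥ := by
    intro i hi
    rw [Submodule.eq_bot_iff]
    intro x hx
    obtain ⟨hxD, hxT⟩ := Submodule.mem_inf.1 hx
    have hxU : x ∈ U := le_sum_of_mem hi (Submodule.mem_inf.2 ⟨hDD' hxD, hxT⟩)
    exact (Submodule.mem_bot F).1 (hUDbot ▸ Submodule.mem_inf.2 ⟨hxU, hxD⟩)
  have hDAB : ∀ i ∈ Icc 1 (t+1), D ≤ A i ⊔ (B i ⊓ Tis M A i) := by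
    intro i hi
    exact le_trans hDD' (le_trans inf_le_right (le_trans (Finset.inf_le hi) inf_le_right))
  have hk : eH C - (eH (C ⊔ Es A M) - eH (Es A M))
      - (∑ i ∈ Icc 1 M, eH (Tis M A i ⊓ C))
      - ∑ i ∈ Icc 1 (t+1), ((eH (C ⊔ (A i ⊔ B i)) - eH (A i ⊔ B i))
          + (eH (B i ⊔ Tis M A i) - eH (Tis M A i))) ≤ eH D := by
    have hsum : ∑ i ∈ Icc 1 (t+1), (- ((eH (C ⊔ (A i ⊔ B i)) - eH (A i ⊔ B i))
        + (eH (B i ⊔ Tis M A i) - eH (Tis M A i))))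
        ≤ ∑ i ∈ Icc 1 (t+1), (eH (m i) - eH C) := by
      refine Finset.sum_le_sum ?_
      intro i hi
      have := hm_ge i hi
      linarith
    have hCT := eH_sup_inf C (Es A M)
    rw [Finset.sum_neg_distrib] at hsum
    linarith [hD'dim, hUdim, hDdim0, hsum]
  -- Stage 2: complements and projections
  have hGex : ∀ i : ℕ, ∃ G : Submodule F V, G ≤ A (i+1) ∧ (Es A i ⊓ A (i+1)) ⊓ G = ⊥ ∧
      (Es A i ⊓ A (i+1)) ⊔ G = A (i+1) ∧ eH G = eH (A (i+1)) - eH (Es A i ⊓ A (i+1)) :=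
    fun i => exists_compl_inside inf_le_right
  choose Gp hGpA hGpbot hGpsup hGpdim using hGex
  obtain ⟨GR, hGRR, hGRbot, hGRsup, hGRdim⟩ :=
    exists_compl_inside (inf_le_right : Es A (t+1) ⊓ SMs M A (t+1) ≤ SMs M A (t+1))
  obtain ⟨Gι, hGι⟩ := (Es A M).exists_isCompl
  set K : ℕ → Submodule F V := fun i => ((∑ j ∈ Ico i (t+1), Gp j) ⊔ GR) ⊔ Gι with hK_def
  have hEGp_bot : ∀ i, Es A i ⊓ Gp i = ⊥ := by
    intro i
    rw [Submodule.eq_bot_iff]; intro x hx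
    obtain ⟨h1, h2⟩ := Submodule.mem_inf.1 hx
    exact (Submodule.mem_bot F).1 ((hGpbot i) ▸ Submodule.mem_inf.2
      ⟨Submodule.mem_inf.2 ⟨h1, hGpA i h2⟩, h2⟩)
  have hEGp_sup : ∀ i, Es A i ⊔ Gp i = Es A (i+1) := by
    intro i
    rw [Es_succ]
    apply le_antisymm (sup_le le_sup_left (le_trans (hGpA i) le_sup_right))
    refine sup_le le_sup_left ?_
    conv_lhs => rw [← hGpsup i]
    exact sup_le (le_trans inf_le_left le_sup_left) le_sup_right
  have hKrec : ∀ i, i ≤ t → K i = Gp i ⊔ K (i+1) := by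
    intro i hi
    simp only [hK_def]
    rw [Finset.sum_eq_sum_Ico_succ_bot (by omega : i < t+1)]
    simp only [Submodule.add_eq_sup, sup_assoc]
  have hKt1 : K (t+1) = GR ⊔ Gι := by
    simp only [hK_def]
    rw [Finset.Ico_self]
    simp
  have hbase : IsCompl (Es A (t+1)) (K (t+1)) := by
    rw [hKt1]
    apply isCompl_shift
    · rw [Submodule.eq_bot_iff]; intro x hx
      obtain ⟨h1, h2⟩ := Submodule.mem_inf.1 hx
      exact (Submodule.mem_bot F).1 (hGRbot ▸ Submodule.mem_inf.2
        ⟨Submodule.mem_inf.2 ⟨h1, hGRR h2⟩, h2⟩)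
    · have hTeq : Es A (t+1) ⊔ GR = Es A M := by
        apply le_antisymm (sup_le (Es_mono A (by omega)) (le_trans hGRR (SMs_le_T A M _)))
        rw [← Es_sup_SMs A M (by omega : t+1 ≤ M)]
        refine sup_le le_sup_left ?_
        conv_lhs => rw [← hGRsup]
        exact sup_le (le_trans inf_le_left le_sup_left) le_sup_right
      rw [hTeq]; exact hGι
  have hcompl : ∀ i, i ≤ t+1 → IsCompl (Es A i) (K i) := by
    have hdown : ∀ c, c ≤ t+1 → IsCompl (Es A (t+1-c)) (K (t+1-c)) := by
      intro c
      induction c with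
      | zero => intro _; exact hbase
      | succ n ih =>
          intro hn
          have hi : t+1-(n+1) ≤ t := by omega
          have heq : (t+1-(n+1))+1 = t+1-n := by omega
          rw [hKrec _ hi]
          apply isCompl_shift (hEGp_bot _)
          rw [hEGp_sup, heq]
          exact ih (by omega)
    intro i hi
    have := hdown (t+1-i) (by omega)
    rwa [show t+1-(t+1-i) = i by omega] at this
  have hqex : ∀ i, ∃ qq : V →ₗ[F] V, i ≤ t+1 →
      ((∀ x ∈ Es A i, qq x = x) ∧ (∀ x, qq x ∈ Es A i) ∧ (∀ x, x - qq x ∈ K i) ∧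
        (∀ x u, u ∈ Es A i → x - u ∈ K i → qq x = u)) := by
    intro i
    by_cases hi : i ≤ t+1
    · obtain ⟨qq, hq1, hq2, hq3, hq4⟩ := proj_props (hcompl i hi)
      exact ⟨qq, fun _ => ⟨hq1, hq2, hq3, hq4⟩⟩
    · exact ⟨0, fun h => absurd h hi⟩
  choose q hq using hqex
  have hq0 : ∀ x, q 0 x = 0 := by
    intro x
    have := (hq 0 (by omega)).2.1 x
    rw [Es_zero] at this
    exact (Submodule.mem_bot F).1 this
  have hqK0 : ∀ i, i ≤ t+1 → ∀ x ∈ K i, q i x = 0 := by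
    intro i hi x hx
    exact (hq i hi).2.2.2 x 0 (Submodule.zero_mem _) (by simpa using hx)
  have hKmono : ∀ i, i ≤ t → K (i+1) ≤ K i := by
    intro i hi; rw [hKrec i hi]; exact le_sup_right
  have hqq : ∀ i, i ≤ t → ∀ x, q i (q (i+1) x) = q i x := by
    intro i hi x
    refine (hq i (by omega)).2.2.2 _ _ ((hq i (by omega)).2.1 x) ?_
    have h1 : x - q (i+1) x ∈ K (i+1) := (hq (i+1) (by omega)).2.2.1 x
    have h2 : x - q i x ∈ K i := (hq i (by omega)).2.2.1 x
    have heq : q (i+1) x - q i x = (x - q i x) - (x - q (i+1) x) := by abel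
    rw [heq]
    exact Submodule.sub_mem _ h2 (hKmono i hi h1)
  have hKT : ∀ i, i ≤ t+1 → ∀ z ∈ K i, z ∈ Es A M → z ∈ SMs M A i := by
    intro i hi z hz hzT
    simp only [hK_def] at hz
    obtain ⟨a, ha, b, hb, rfl⟩ := Submodule.mem_sup.1 hz
    have haSM : a ∈ SMs M A i := by
      have hle : (∑ j ∈ Ico i (t+1), Gp j) ⊔ GR ≤ SMs M A i := by
        refine sup_le (sum_le_submodule ?_) (le_trans hGRR (SMs_mono A M (by omega)))
        intro j hj
        simp only [Finset.mem_Ico] at hj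
        exact le_trans (hGpA j) (A_le_SMs A M (by omega) (by omega))
      exact hle ha
    have hb0 : b = 0 := by
      have hbT : b ∈ Es A M := by
        have heq : b = (a + b) - a := by abel
        rw [heq]
        exact Submodule.sub_mem _ hzT (SMs_le_T A M i haSM)
      have hd := disjoint_iff.1 hGι.disjoint
      exact (Submodule.mem_bot F).1 (hd ▸ Submodule.mem_inf.2 ⟨hbT, hb⟩)
    rw [hb0, add_zero]
    exact haSM
  set pm : ℕ → (V →ₗ[F] V) := fun i => q (i+1) - q i with hpm_def
  have hpm_apply : ∀ i x, pm i x = q (i+1) x - q i x := fun i x => rfl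
  have hpG : ∀ i, i ≤ t → ∀ x, pm i x ∈ Gp i := by
    intro i hi x
    have hy : q (i+1) x ∈ Es A (i+1) := (hq (i+1) (by omega)).2.1 x
    rw [← hEGp_sup i] at hy
    obtain ⟨u, hu, g, hg, hug⟩ := Submodule.mem_sup.1 hy
    have hqi : q i x = u := by
      refine (hq i (by omega)).2.2.2 x u hu ?_
      have h1 : x - q (i+1) x ∈ K (i+1) := (hq (i+1) (by omega)).2.2.1 x
      have heq : x - u = (x - q (i+1) x) + g := by rw [← hug]; abel
      rw [heq, hKrec i hi]
      exact Submodule.add_mem _ (Submodule.mem_sup_right h1) (Submodule.mem_sup_left hg)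
    have heq : pm i x = g := by
      rw [hpm_apply, hqi, ← hug]; abel
    rw [heq]; exact hg
  have hpE : ∀ i, i ≤ t → ∀ x ∈ Es A i, pm i x = 0 := by
    intro i hi x hx
    have h1 : q (i+1) x = x := (hq (i+1) (by omega)).1 x (Es_mono A (by omega) hx)
    have h2 : q i x = x := (hq i (by omega)).1 x hx
    rw [hpm_apply, h1, h2, sub_self]
  have hpSM : ∀ i, i ≤ t → ∀ x ∈ SMs M A (i+1),
      pm i x ∈ (Es A (i+1) ⊓ SMs M A (i+1)).map (pm i) := by
    intro i hi x hx
    have hyE : q (i+1) x ∈ Es A (i+1) := (hq (i+1) (by omega)).2.1 x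
    have hyS : q (i+1) x ∈ SMs M A (i+1) := by
      have hxy : x - q (i+1) x ∈ SMs M A (i+1) :=
        hKT (i+1) (by omega) _ ((hq (i+1) (by omega)).2.2.1 x)
          (Submodule.sub_mem _ (SMs_le_T A M (i+1) hx) (Es_mono A (by omega : i+1 ≤ M) hyE))
      have heq : q (i+1) x = x - (x - q (i+1) x) := by abel
      rw [heq]
      exact Submodule.sub_mem _ hx hxy
    refine Submodule.mem_map.2 ⟨q (i+1) x, Submodule.mem_inf.2 ⟨hyE, hyS⟩, ?_⟩
    rw [hpm_apply, hpm_apply, (hq (i+1) (by omega)).1 _ hyE, hqq i hi x]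
  have hpker : ∀ i, i ≤ t → ∀ x ∈ D, pm i x = 0 → x = 0 := by
    intro i hi x hxD hp0
    have hqeq : q (i+1) x = q i x := by
      have := sub_eq_zero.1 (by rw [← hpm_apply]; exact hp0)
      exact this
    have h1 : q (i+1) x ∈ Tis M A (i+1) := by
      rw [hqeq]
      exact Es_le_Tis A M (by omega) ((hq i (by omega)).2.1 x)
    have h2 : x - q (i+1) x ∈ Tis M A (i+1) := by
      refine SMs_le_Tis A M (i+1) (hKT (i+1) (by omega) _ ((hq (i+1) (by omega)).2.2.1 x) ?_)
      exact Submodule.sub_mem _ (hDT hxD) (Es_mono A (by omega : i+1 ≤ M) ((hq (i+1) (by omega)).2.1 x))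
    have hx : x ∈ Tis M A (i+1) := by
      have heq : x = q (i+1) x + (x - q (i+1) x) := by abel
      rw [heq]
      exact Submodule.add_mem _ h1 h2
    have := hDTi (i+1) (by simp; omega)
    exact (Submodule.mem_bot F).1 (this ▸ Submodule.mem_inf.2 ⟨hxD, hx⟩)
  have htel : ∀ x, ∑ i ∈ range (t+1), pm i x = q (t+1) x := by
    intro x
    have hc : ∀ i ∈ range (t+1), pm i x = q (i+1) x - q i x := fun i _ => rfl
    rw [Finset.sum_congr rfl hc, Finset.sum_range_sub (fun i => q i x), hq0, sub_zero]
  -- Stage 3: splittings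
  have hαβ : ∀ i : ℕ, ∃ ab : (↥D →ₗ[F] V) × (↥D →ₗ[F] V), i ≤ t →
      ((∀ d, ab.1 d ∈ A (i+1)) ∧ (∀ d, ab.2 d ∈ B (i+1) ⊓ Tis M A (i+1)) ∧
        (∀ d : ↥D, (d : V) = ab.1 d + ab.2 d)) := by
    intro i
    by_cases hi : i ≤ t
    case neg => exact ⟨(0, 0), fun h => absurd h hi⟩
    case pos =>
      have hDle : D ≤ A (i+1) ⊔ (B (i+1) ⊓ Tis M A (i+1)) := hDAB (i+1) (by simp; omega)
      set f : (↥(A (i+1)) × ↥(B (i+1) ⊓ Tis M A (i+1))) →ₗ[F] V :=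
        (A (i+1)).subtype.coprod (B (i+1) ⊓ Tis M A (i+1)).subtype with hf_def
      have hrange : LinearMap.range f = A (i+1) ⊔ (B (i+1) ⊓ Tis M A (i+1)) := by
        rw [hf_def, LinearMap.range_coprod, Submodule.range_subtype, Submodule.range_subtype]
      set f' : (↥(A (i+1)) × ↥(B (i+1) ⊓ Tis M A (i+1)))
          →ₗ[F] ↥(A (i+1) ⊔ (B (i+1) ⊓ Tis M A (i+1))) :=
        f.codRestrict _ (fun x => hrange ▸ LinearMap.mem_range_self f x) with hf'_def
      have hsurj : LinearMap.range f' = ⊤ := by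
        rw [LinearMap.range_eq_top]
        intro y
        have hy : (y : V) ∈ LinearMap.range f := by rw [hrange]; exact y.2
        obtain ⟨z, hz⟩ := hy
        refine ⟨z, Subtype.ext ?_⟩
        simpa [hf'_def] using hz
      obtain ⟨g, hg⟩ := f'.exists_rightInverse_of_surjective hsurj
      refine ⟨((A (i+1)).subtype ∘ₗ (LinearMap.fst F _ _) ∘ₗ (g ∘ₗ Submodule.inclusion hDle),
               (B (i+1) ⊓ Tis M A (i+1)).subtype ∘ₗ (LinearMap.snd F _ _)
                 ∘ₗ (g ∘ₗ Submodule.inclusion hDle)), fun _ => ⟨?_, ?_, ?_⟩⟩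
      · intro d; exact ((g (Submodule.inclusion hDle d)).1).2
      · intro d; exact ((g (Submodule.inclusion hDle d)).2).2
      · intro d
        have h1 : f' (g (Submodule.inclusion hDle d)) = Submodule.inclusion hDle d := by
          rw [← LinearMap.comp_apply, hg, LinearMap.id_apply]
        have h2 := congrArg Subtype.val h1
        simp only [hf'_def, LinearMap.codRestrict_apply, hf_def, LinearMap.coprod_apply,
          Submodule.coe_subtype, Submodule.coe_inclusion] at h2
        simp only [LinearMap.comp_apply, Submodule.coe_subtype]
        exact h2.symm
  choose ab hab using hαβ
  -- spanning subspaces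
  set W : Submodule F V :=
    ∑ i ∈ range (t+1), ((B (i+1) ⊓ Tis M A (i+1)).map (q (t+1))) with hW_def
  set Fs : Submodule F V :=
    ∑ i ∈ range (t+1), ((Es A (i+1) ⊓ SMs M A (i+1)).map (pm i)) with hFs_def
  have hFple : ∀ i, i ≤ t → (Es A (i+1) ⊓ SMs M A (i+1)).map (pm i) ≤ Fs := by
    intro i hi
    rw [hFs_def]
    exact le_sum_of_mem (f := fun j => (Es A (j+1) ⊓ SMs M A (j+1)).map (pm j)) (i := i)
      (Finset.mem_range.2 (by omega))
  have hWF1 : ∀ i, i ≤ t → ∀ d : ↥D, q (t+1) (d : V) - pm i (d : V) ∈ W ⊔ Fs := by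
    intro i hi d
    obtain ⟨hA, hB, hsum⟩ := hab i hi
    have hαE : (ab i).1 d ∈ Es A (t+1) :=
      Es_mono A (by omega) (A_le_Es A (by omega) (hA d))
    have heα : q (t+1) ((ab i).1 d) = (ab i).1 d := (hq (t+1) (le_refl _)).1 _ hαE
    have hed : q (t+1) (d : V) = (ab i).1 d + q (t+1) ((ab i).2 d) := by
      conv_lhs => rw [hsum d]
      rw [map_add, heα]
    have h0 : ∑ j ∈ range (t+1), pm j ((ab i).1 d) = (ab i).1 d := by
      rw [htel]; exact heα
    have hmem : i ∈ range (t+1) := by simp; omega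
    have hsplit : (ab i).1 d - pm i (d:V)
        = (∑ j ∈ (range (t+1)).erase i, pm j ((ab i).1 d))
          + (pm i ((ab i).1 d) - pm i (d:V)) := by
      conv_lhs => rw [← h0, ← Finset.sum_erase_add _ _ hmem]
      abel
    have hterm : ∀ j ∈ (range (t+1)).erase i, pm j ((ab i).1 d) ∈ Fs := by
      intro j hj
      rw [Finset.mem_erase, Finset.mem_range] at hj
      rcases lt_or_gt_of_ne hj.1 with hc | hc
      · exact hFple j (by omega)
          (hpSM j (by omega) _ (A_le_SMs A M (i := j+1) (l := i+1) (by omega) (by omega) (hA d)))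
      · have h0' : pm j ((ab i).1 d) = 0 :=
          hpE j (by omega) _ (Es_mono A (by omega : i+1 ≤ j) (A_le_Es A (by omega) (hA d)))
        rw [h0']; exact Submodule.zero_mem _
    have hβF : pm i ((ab i).2 d) ∈ Fs := by
      have hβT : (ab i).2 d ∈ Es A i ⊔ SMs M A (i+1) :=
        Tis_le_sup A M i (inf_le_right (a := B (i+1)) (hB d))
      obtain ⟨u, hu, s, hs, heq⟩ := Submodule.mem_sup.1 hβT
      have heq2 : pm i ((ab i).2 d) = pm i u + pm i s := by
        rw [← map_add, heq]
      rw [heq2, hpE i (by omega) u hu, zero_add]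
      exact hFple i (by omega) (hpSM i (by omega) s hs)
    have hβ2 : pm i ((ab i).1 d) - pm i (d:V) = - pm i ((ab i).2 d) := by
      conv_lhs => rw [hsum d]
      rw [map_add]
      abel
    have hFmem : (ab i).1 d - pm i (d:V) ∈ Fs := by
      rw [hsplit, hβ2]
      exact Submodule.add_mem _
        (Submodule.sum_mem _ hterm) (Submodule.neg_mem _ hβF)
    have hWmem : q (t+1) ((ab i).2 d) ∈ W := by
      rw [hW_def]
      refine le_sum_of_mem (f := fun j => (B (j+1) ⊓ Tis M A (j+1)).map (q (t+1))) (i := i)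
        (Finset.mem_range.2 (by omega)) ?_
      exact Submodule.mem_map.2 ⟨(ab i).2 d, hB d, rfl⟩
    have hfinal : q (t+1) (d : V) - pm i (d : V)
        = q (t+1) ((ab i).2 d) + ((ab i).1 d - pm i (d:V)) := by
      rw [hed]; abel
    rw [hfinal]
    exact Submodule.add_mem _ (Submodule.mem_sup_left hWmem) (Submodule.mem_sup_right hFmem)
  -- Stage 4: char step and dimension count
  have hWF3 : ∀ d : ↥D, q (t+1) (d:V) ∈ W ⊔ Fs := by
    intro d
    have hsum2 : ∑ i ∈ range (t+1), (q (t+1) (d:V) - pm i (d:V))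
        = (t : F) • q (t+1) (d:V) := by
      rw [Finset.sum_sub_distrib, Finset.sum_const, Finset.card_range, htel,
        succ_nsmul, Nat.cast_smul_eq_nsmul]
      abel
    have hmemsum : (t : F) • q (t+1) (d:V) ∈ W ⊔ Fs := by
      rw [← hsum2]
      exact Submodule.sum_mem _
        (fun i hi => hWF1 i (by rw [Finset.mem_range] at hi; omega) d)
    have hsm := Submodule.smul_mem _ (t : F)⁻¹ hmemsum
    rwa [inv_smul_smul₀ hchar] at hsm
  have hWF4 : ∀ i, i ≤ t → D.map (pm i) ≤ W ⊔ Fs := by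
    intro i hi x hx
    obtain ⟨d, hd, rfl⟩ := Submodule.mem_map.1 hx
    have h1 := hWF3 ⟨d, hd⟩
    have h2 := hWF1 i hi ⟨d, hd⟩
    have heq : pm i d = q (t+1) d - (q (t+1) d - pm i d) := by abel
    rw [heq]
    exact Submodule.sub_mem _ h1 h2
  have hDmap_eH : ∀ i, i ≤ t → eH (D.map (pm i)) = eH D := by
    intro i hi
    have hker : D ⊓ LinearMap.ker (pm i) = ⊥ := by
      rw [Submodule.eq_bot_iff]
      intro x hx
      obtain ⟨h1, h2⟩ := Submodule.mem_inf.1 hx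
      exact hpker i hi x h1 (LinearMap.mem_ker.1 h2)
    have h3 := eH_map_add_ker (pm i) D
    rw [hker, eH_bot] at h3
    linarith
  have hDmaps : ∀ n, n ≤ t+1 → eH (∑ i ∈ range n, D.map (pm i)) = (n : ℤ) * eH D := by
    intro n
    induction n with
    | zero => intro _; simp [eH]; exact finrank_bot F V
    | succ n ih =>
        intro hn
        rw [Finset.sum_range_succ, Submodule.add_eq_sup]
        have hle : (∑ i ∈ range n, D.map (pm i)) ≤ Es A n := by
          apply sum_le_submodule
          intro j hj
          rw [Finset.mem_range] at hj
          intro x hx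
          obtain ⟨d, hd, rfl⟩ := Submodule.mem_map.1 hx
          exact Es_mono A (by omega : j+1 ≤ n) (A_le_Es A (by omega) (hGpA j (hpG j (by omega) d)))
        have hG : D.map (pm n) ≤ Gp n := by
          intro x hx
          obtain ⟨d, hd, rfl⟩ := Submodule.mem_map.1 hx
          exact hpG n (by omega) d
        have hbot2 : (∑ i ∈ range n, D.map (pm i)) ⊓ D.map (pm n) = ⊥ := by
          rw [Submodule.eq_bot_iff]
          intro x hx
          obtain ⟨h1, h2⟩ := Submodule.mem_inf.1 hx
          exact (Submodule.mem_bot F).1 ((hEGp_bot n) ▸ Submodule.mem_inf.2 ⟨hle h1, hG h2⟩)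
        rw [eH_disjoint_sup hbot2, ih (by omega), hDmap_eH n (by omega)]
        push_cast
        ring
  have hsubWF : (∑ i ∈ range (t+1), D.map (pm i)) ≤ W ⊔ Fs :=
    sum_le_submodule (fun i hi => hWF4 i (by rw [Finset.mem_range] at hi; omega))
  have hWdim : ((t:ℤ)+1) * eH D
      ≤ eH W + ∑ i ∈ range (t+1), eH (Es A (i+1) ⊓ SMs M A (i+1)) := by
    have h1 := eH_mono hsubWF
    rw [hDmaps (t+1) (le_refl _)] at h1
    have h2 := eH_sup_inf W Fs
    have h3 := eH_nonneg (W ⊓ Fs)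
    have h4 : eH Fs ≤ ∑ i ∈ range (t+1), eH (Es A (i+1) ⊓ SMs M A (i+1)) := by
      rw [hFs_def]
      refine le_trans (eH_sum_le _ _) (Finset.sum_le_sum ?_)
      intro i _
      exact eH_map_le _ _
    push_cast at h1
    linarith
  set Z : Submodule F V := (∑ i ∈ range (t+1), (B (i+1) ⊓ Tis M A (i+1))) ⊔ GR with hZ_def
  have hGRK : GR ≤ K (t+1) := by rw [hKt1]; exact le_sup_left
  have hZmap : Z.map (q (t+1)) = W := by
    rw [hZ_def, Submodule.map_sup, map_finsetSum', hW_def]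
    have hGR0 : GR.map (q (t+1)) = ⊥ := by
      rw [Submodule.eq_bot_iff]
      intro x hx
      obtain ⟨g, hg, rfl⟩ := Submodule.mem_map.1 hx
      simp [hqK0 (t+1) (le_refl _) g (hGRK hg)]
    rw [hGR0, sup_bot_eq]
  have hZdim : eH W + eH GR ≤ eH Z := by
    have h1 := eH_map_add_ker (q (t+1)) Z
    rw [hZmap] at h1
    have h2 : GR ≤ Z ⊓ LinearMap.ker (q (t+1)) := by
      refine le_inf ?_ ?_
      · rw [hZ_def]; exact le_sup_right
      · intro x hx
        exact LinearMap.mem_ker.2 (hqK0 (t+1) (le_refl _) x (hGRK hx))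
    have h3 := eH_mono h2
    linarith
  have hTD : ∀ j, j ∈ Icc 1 M → eH D ≤ eH (Es A M) - eH (Tis M A j) := by
    intro j hj
    have hbot3 : Tis M A j ⊓ D = ⊥ := by rw [inf_comm]; exact hDTi j hj
    have h1 := eH_disjoint_sup hbot3
    have h2 : eH (Tis M A j ⊔ D) ≤ eH (Es A M) := eH_mono (sup_le (Tis_le_T A M j) hDT)
    linarith
  have hRdim : ∀ c, c ≤ M - (t+1) → (c : ℤ) * eH D ≤ eH (SMs M A (M - c)) := by
    intro c
    induction c with
    | zero => intro _; simpa using eH_nonneg (SMs M A M)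
    | succ n ih =>
        intro hc
        have hj : M - (n+1) < M := by omega
        have hrec := SMs_rec A M hj
        have hmem : M-(n+1)+1 ∈ Icc 1 M := by simp; omega
        have hstep : eH D ≤ eH (A (M-(n+1)+1)) - eH (A (M-(n+1)+1) ⊓ SMs M A (M-(n+1)+1)) := by
          have h1 := eH_sup_inf (A (M-(n+1)+1)) (Tis M A (M-(n+1)+1))
          rw [A_sup_Tis A M hmem] at h1
          have h2 : eH (A (M-(n+1)+1) ⊓ SMs M A (M-(n+1)+1))
              ≤ eH (A (M-(n+1)+1) ⊓ Tis M A (M-(n+1)+1)) :=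
            eH_mono (inf_le_inf_left _ (SMs_le_Tis A M _))
          have h3 := hTD (M-(n+1)+1) hmem
          linarith
        have h4 := eH_sup_inf (A (M-(n+1)+1)) (SMs M A (M-(n+1)+1))
        rw [← hrec] at h4
        have h5 := ih (by omega)
        rw [show M - n = M-(n+1)+1 by omega] at h5
        push_cast
        linarith
  have hR : ((M:ℤ) - t - 1) * eH D ≤ eH (SMs M A (t+1)) := by
    have h1 := hRdim (M - (t+1)) (le_refl _)
    rw [show M - (M - (t+1)) = t+1 by omega] at h1
    rw [Nat.cast_sub htM] at h1
    push_cast at h1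
    have heq : ((M:ℤ) - t - 1) = ((M:ℤ) - (t+1)) := by ring
    rw [heq]
    exact h1
  have hZle : Z ≤ (∑ i ∈ Icc 1 (t+1), B i) ⊔ (∑ i ∈ Icc (t+2) M, A i) := by
    rw [hZ_def]
    refine sup_le (sum_le_submodule ?_) ?_
    · intro i hi
      rw [Finset.mem_range] at hi
      refine le_trans inf_le_left (le_trans ?_ le_sup_left)
      exact le_sum_of_mem (by simp; omega : i+1 ∈ Icc 1 (t+1))
    · refine le_trans hGRR (le_trans (le_of_eq rfl) le_sup_right)
  have hXge : (M:ℤ) * eH D - eH (Es A (t+1) ⊓ SMs M A (t+1))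
      - (∑ i ∈ range (t+1), eH (Es A (i+1) ⊓ SMs M A (i+1)))
      ≤ eH ((∑ i ∈ Icc 1 (t+1), B i) ⊔ (∑ i ∈ Icc (t+2) M, A i)) := by
    have h1 := eH_mono hZle
    have h2 : eH GR = eH (SMs M A (t+1)) - eH (Es A (t+1) ⊓ SMs M A (t+1)) := hGRdim
    linarith [hZdim, hWdim, hR]
  -- final assembly
  have hJ1 : eH (Es A (t+1) ⊓ SMs M A (t+1))
      ≤ ∑ i ∈ range (t+1), eH (Es A (i+1) ⊓ SMs M A (i+1)) :=
    Finset.single_le_sum (f := fun i => eH (Es A (i+1) ⊓ SMs M A (i+1)))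
      (fun i _ => eH_nonneg _) (by simp : t ∈ range (t+1))
  have hJ0 : 0 ≤ ∑ i ∈ range (t+1), eH (Es A (i+1) ⊓ SMs M A (i+1)) :=
    Finset.sum_nonneg (fun i _ => eH_nonneg _)
  have hs2 : 0 ≤ ∑ i ∈ Icc 2 (t+1), eH ((∑ j ∈ Icc 1 (i-1), A j) ⊓ A i) :=
    Finset.sum_nonneg (fun i _ => eH_nonneg _)
  have hIrr : ∑ i ∈ Icc 1 (t+1), eH (Es A i ⊓ SMs M A i)
      = ∑ i ∈ range (t+1), eH (Es A (i+1) ⊓ SMs M A (i+1)) :=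
    sum_Icc_one_int (t+1) (fun i => eH (Es A i ⊓ SMs M A i))
  have hsplit3 : ∑ i ∈ Icc 1 (t+1), ((eH (C ⊔ (A i ⊔ B i)) - eH (A i ⊔ B i))
        + (eH (B i ⊔ Tis M A i) - eH (Tis M A i)) + eH (Es A i ⊓ SMs M A i))
      = (∑ i ∈ Icc 1 (t+1), ((eH (C ⊔ (A i ⊔ B i)) - eH (A i ⊔ B i))
          + (eH (B i ⊔ Tis M A i) - eH (Tis M A i))))
        + ∑ i ∈ Icc 1 (t+1), eH (Es A i ⊓ SMs M A i) := by
    rw [← Finset.sum_add_distrib]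
  have hMZ : (0:ℤ) ≤ (M:ℤ) := by positivity
  have hM2 : (2:ℤ) ≤ (M:ℤ) := by exact_mod_cast h2M
  have e2 := mul_le_mul_of_nonneg_left hk hMZ
  have e3 := mul_le_mul_of_nonneg_right hM2 hJ0
  have e4 : (0:ℤ) ≤ (M:ℤ) * (∑ i ∈ Icc 2 (t+1), eH ((∑ j ∈ Icc 1 (i-1), A j) ⊓ A i)) :=
    mul_nonneg hMZ hs2
  calc (M:ℤ) * eH C
      ≤ eH ((∑ i ∈ Icc 1 (t+1), B i) ⊔ (∑ i ∈ Icc (t+2) M, A i))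
        + (M:ℤ) * ((eH (C ⊔ Es A M) - eH (Es A M))
          + (∑ i ∈ Icc 1 M, eH (Tis M A i ⊓ C))
          + (∑ i ∈ Icc 2 (t+1), eH ((∑ j ∈ Icc 1 (i-1), A j) ⊓ A i))
          + ∑ i ∈ Icc 1 (t+1), ((eH (C ⊔ (A i ⊔ B i)) - eH (A i ⊔ B i))
              + (eH (B i ⊔ Tis M A i) - eH (Tis M A i)) + eH (Es A i ⊓ SMs M A i))) := by
        nlinarith [hXge, e2, e3, e4, hJ1, hsplit3, hIrr]
    _ = eH ((∑ i ∈ Icc 1 (t+1), B i) ⊔ ∑ i ∈ Icc (t+2) M, A i)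
        + (M:ℤ) * ((eH (C ⊔ ∑ i ∈ Icc 1 M, A i) - eH (∑ i ∈ Icc 1 M, A i))
          + ∑ i ∈ Icc 1 M, eH ((∑ j ∈ (Icc 1 M).erase i, A j) ⊓ C)
          + ∑ i ∈ Icc 2 (t+1), eH ((∑ j ∈ Icc 1 (i-1), A j) ⊓ A i)
          + ∑ i ∈ Icc 1 (t+1),
              ((eH (C ⊔ (A i ⊔ B i)) - eH (A i ⊔ B i))
                + (eH (B i ⊔ ∑ j ∈ (Icc 1 M).erase i, A j)
                    - eH (∑ j ∈ (Icc 1 M).erase i, A j))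
                + eH ((∑ j ∈ Icc 1 i, A j) ⊓ (∑ j ∈ Icc (i+1) M, A j)))) := rfl


/-- Characteristic-dependent linear rank inequality (b): for `n ≥ 7`,
`2 ≤ t ≤ ⌊(n−1)/2⌋ − 1`, `M = n − t − 2`, over a finite field whose
characteristic does not divide `t`, inequality (b) holds for all subspaces
`A_1,…,A_M, B_1,…,B_{t+1}, C`. -/
theorem ineqB_of_char_not_dvd (n t M : ℕ) (hn : 7 ≤ n) (ht2 : 2 ≤ t)
    (ht : t ≤ (n - 1) / 2 - 1) (hM : M = n - t - 2)
    (F V : Type*) [Field F] [Fintype F] [AddCommGroup V] [Module F V]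
    [FiniteDimensional F V] (hchar : ¬ ringChar F ∣ t)
    (A B : ℕ → Submodule F V) (C : Submodule F V) :
    IneqB t M A B C := by
  have hM1 : t + 1 ≤ M := by omega
  have hM2 : 2 ≤ M := by omega
  have hchar' : (t : F) ≠ 0 := fun h => hchar ((ringChar.spec F t).mp h)
  exact coreB t M hM1 hM2 hchar' A B C
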